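/- Suppose γ_A, γ_D > 0, κ_U, κ_A > 0, σ_A², σ_D² > 0, |g|² ≥ 0, and channel gains λ_U^{**}, λ_D^{**} > 0 achieved by CGM beamforming, with interference terms I_U = |f_DU^H θ_U^{**}|² and I_D = |g_DU^H θ_D^{**}|². If κ_A|g|²/N² ≤ κ_U·λ_D^{LB}·(2^{γ_A}−1)/(6(2^{γ_D}−1)N²) + κ_A·λ_U^{LB}·(2^{γ_D}−1)σ_D²/(6(2^{γ_A}−1)σ_A²N²) − κ_A(I_U + I_D)/N², where λ_U^{LB} = (|h_AU| − |f_AU^H θ_U^{**}|)² and λ_D^{LB} = (|h_DA| − |g_DA^H θ_D^{**}|)², then the HD power L̃₁ = κ_U(2^{2γ_A}−1)σ_A²/(2λ_U^{**}) + κ_A(2^{2γ_D}−1)σ_D²/(2λ_D^{**}) is at least the FD power evaluated at the same beamformers: L₁(θ_U^{**}, θ_D^{**}) = γ̄₁λ_DU^{**}/(λ_D^{**}λ_U^{**}) + γ̄₂/λ_D^{**} + γ̄₃/λ_U^{**}, with λ_DU^{**} ≤ 3(|g|² + I_U + I_D), γ̄₁ = κ_A(2^{γ_D}−1)(2^{γ_A}−1)σ_A²,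 γ̄₂ = κ_A(2^{γ_D}−1)σ_D², γ̄₃ = κ_U(2^{γ_A}−1)σ_A². -/

import Mathlib

set_option maxHeartbeats 1000000 in
theorem fd_outperforms_hd_sufficient_condition
    (κU κA γA γD σA2 σD2 N : ℝ)
    (hAU hDA g cfAU cgDA cfDU cgDU : ℂ)
    (hκU : 0 < κU) (hκA : 0 < κA) (hγA : 0 < γA) (hγD : 0 < γD)
    (hσA : 0 < σA2) (hσD : 0 < σD2) (hN : 0 < N)
    (hlU : 0 < ‖hAU + cfAU‖ ^ 2)
    (hlD : 0 < ‖hDA + cgDA‖ ^ 2)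
    (hcond :
      κA * ‖g‖ ^ 2 / N ^ 2 ≤
        κU * (‖hDA‖ - ‖cgDA‖) ^ 2 * ((2 : ℝ) ^ γA - 1)
            / (6 * ((2 : ℝ) ^ γD - 1) * N ^ 2)
          + κA * (‖hAU‖ - ‖cfAU‖) ^ 2 * ((2 : ℝ) ^ γD - 1) * σD2
            / (6 * ((2 : ℝ) ^ γA - 1) * σA2 * N ^ 2)
          - κA * (‖cfDU‖ ^ 2 + ‖cgDU‖ ^ 2) / N ^ 2) :
    let lU : ℝ := ‖hAU + cfAU‖ ^ 2
    let lD : ℝ := ‖hDA + cgDA‖ ^ 2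
    let lDU : ℝ := ‖g + cfDU + cgDU‖ ^ 2
    let γ1 : ℝ := κA * ((2 : ℝ) ^ γD - 1) * ((2 : ℝ) ^ γA - 1) * σA2
    let γ2 : ℝ := κA * ((2 : ℝ) ^ γD - 1) * σD2
    let γ3 : ℝ := κU * ((2 : ℝ) ^ γA - 1) * σA2
    let L1 : ℝ := γ1 * lDU / (lD * lU) + γ2 / lD + γ3 / lU
    let Lt1 : ℝ := κU * ((2 : ℝ) ^ (2 * γA) - 1) * σA2 / (2 * lU)
                     + κA * ((2 : ℝ) ^ (2 * γD) - 1) * σD2 / (2 * lD)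
    L1 ≤ Lt1 := by
  show κA * ((2 : ℝ) ^ γD - 1) * ((2 : ℝ) ^ γA - 1) * σA2 * ‖g + cfDU + cgDU‖ ^ 2
        / (‖hDA + cgDA‖ ^ 2 * ‖hAU + cfAU‖ ^ 2)
      + κA * ((2 : ℝ) ^ γD - 1) * σD2 / ‖hDA + cgDA‖ ^ 2
      + κU * ((2 : ℝ) ^ γA - 1) * σA2 / ‖hAU + cfAU‖ ^ 2
    ≤ κU * ((2 : ℝ) ^ (2 * γA) - 1) * σA2 / (2 * ‖hAU + cfAU‖ ^ 2)
      + κA * ((2 : ℝ) ^ (2 * γD) - 1) * σD2 / (2 * ‖hDA + cgDA‖ ^ 2)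
  have ha : (0:ℝ) < (2 : ℝ) ^ γA - 1 := by
    have : (1:ℝ) < (2:ℝ) ^ γA := by
      calc (1:ℝ) = (2:ℝ) ^ (0:ℝ) := by simp
      _ < (2:ℝ) ^ γA := (Real.rpow_lt_rpow_left_iff (by norm_num)).mpr hγA
    linarith
  have hb : (0:ℝ) < (2 : ℝ) ^ γD - 1 := by
    have : (1:ℝ) < (2:ℝ) ^ γD := by
      calc (1:ℝ) = (2:ℝ) ^ (0:ℝ) := by simp
      _ < (2:ℝ) ^ γD := (Real.rpow_lt_rpow_left_iff (by norm_num)).mpr hγD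
    linarith
  have h2A : (2 : ℝ) ^ (2 * γA) = ((2:ℝ) ^ γA) ^ 2 := by
    rw [mul_comm, Real.rpow_mul (by norm_num), Real.rpow_two]
  have h2D : (2 : ℝ) ^ (2 * γD) = ((2:ℝ) ^ γD) ^ 2 := by
    rw [mul_comm, Real.rpow_mul (by norm_num), Real.rpow_two]
  rw [h2A, h2D]
  set a : ℝ := (2 : ℝ) ^ γA - 1 with hadef
  set b : ℝ := (2 : ℝ) ^ γD - 1 with hbdef
  have ea : (2:ℝ) ^ γA = a + 1 := by rw [hadef]; ring
  have eb : (2:ℝ) ^ γD = b + 1 := by rw [hbdef]; ring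
  rw [ea, eb]
  have hN2 : (0:ℝ) < N ^ 2 := by positivity
  set u : ℝ := ‖hAU + cfAU‖ ^ 2 with hudef
  set d : ℝ := ‖hDA + cgDA‖ ^ 2 with hddef
  set w : ℝ := ‖g + cfDU + cgDU‖ ^ 2 with hwdef
  -- triangle-type bounds
  have hDUle : w ≤ 3 * (‖g‖ ^ 2 + ‖cfDU‖ ^ 2 + ‖cgDU‖ ^ 2) := by
    have h1 : ‖g + cfDU + cgDU‖ ≤ ‖g‖ + ‖cfDU‖ + ‖cgDU‖ := by
      calc ‖g + cfDU + cgDU‖ ≤ ‖g + cfDU‖ + ‖cgDU‖ :=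
            norm_add_le _ _
      _ ≤ ‖g‖ + ‖cfDU‖ + ‖cgDU‖ := by
            have := norm_add_le g cfDU; linarith
    have h0 : (0:ℝ) ≤ ‖g + cfDU + cgDU‖ := norm_nonneg _
    rw [hwdef]
    nlinarith [sq_nonneg (‖g‖ - ‖cfDU‖),
      sq_nonneg (‖g‖ - ‖cgDU‖),
      sq_nonneg (‖cfDU‖ - ‖cgDU‖)]
  have hLBD : (‖hDA‖ - ‖cgDA‖) ^ 2 ≤ d := by
    have h1 : ‖hDA‖ - ‖cgDA‖ ≤ ‖hDA + cgDA‖ := by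
      have := norm_add_le (hDA + cgDA) (-cgDA); simp at this; linarith
    have h2 : ‖cgDA‖ - ‖hDA‖ ≤ ‖hDA + cgDA‖ := by
      have := norm_add_le (hDA + cgDA) (-hDA); simp at this; linarith
    have h0 : (0:ℝ) ≤ ‖hDA + cgDA‖ := norm_nonneg _
    rw [hddef]; nlinarith
  have hLBU : (‖hAU‖ - ‖cfAU‖) ^ 2 ≤ u := by
    have h1 : ‖hAU‖ - ‖cfAU‖ ≤ ‖hAU + cfAU‖ := by
      have := norm_add_le (hAU + cfAU) (-cfAU); simp at this; linarith
    have h2 : ‖cfAU‖ - ‖hAU‖ ≤ ‖hAU + cfAU‖ := by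
      have := norm_add_le (hAU + cfAU) (-hAU); simp at this; linarith
    have h0 : (0:ℝ) ≤ ‖hAU + cfAU‖ := norm_nonneg _
    rw [hudef]; nlinarith
  -- multiplied-out form of the condition
  have hcond' : 6 * a * b * σA2 * κA *
      (‖g‖ ^ 2 + ‖cfDU‖ ^ 2 + ‖cgDU‖ ^ 2) ≤
      κU * a ^ 2 * σA2 * (‖hDA‖ - ‖cgDA‖) ^ 2
        + κA * b ^ 2 * σD2 * (‖hAU‖ - ‖cfAU‖) ^ 2 := by
    have hNne : N ^ 2 ≠ 0 := ne_of_gt hN2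
    have hane : a ≠ 0 := ne_of_gt ha
    have hbne : b ≠ 0 := ne_of_gt hb
    have hσne : σA2 ≠ 0 := ne_of_gt hσA
    rw [div_add_div _ _ (by positivity : (6:ℝ) * b * N ^ 2 ≠ 0)
        (by positivity : (6:ℝ) * a * σA2 * N ^ 2 ≠ 0),
      div_sub_div _ _ (by positivity : (6:ℝ) * b * N ^ 2 * (6 * a * σA2 * N ^ 2) ≠ 0) hNne,
      div_le_div_iff₀ hN2 (by positivity)] at hcond
    have h6 : (0:ℝ) < 6 * (N ^ 2 * N ^ 2 * N ^ 2) := by positivity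
    rw [← mul_le_mul_iff_of_pos_right h6]
    nlinarith [hcond]
    
  -- key polynomial inequality
  have key : 2 * (κA * b * a * σA2) * w ≤ κU * a ^ 2 * σA2 * d + κA * b ^ 2 * σD2 * u := by
    nlinarith [mul_le_mul_of_nonneg_left hDUle
        (by positivity : (0:ℝ) ≤ 2 * κA * b * a * σA2),
      mul_le_mul_of_nonneg_left hLBD (by positivity : (0:ℝ) ≤ κU * a ^ 2 * σA2),
      mul_le_mul_of_nonneg_left hLBU (by positivity : (0:ℝ) ≤ κA * b ^ 2 * σD2)]
  rw [← sub_nonneg]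
  have e : κU * ((a + 1) ^ 2 - 1) * σA2 / (2 * u) + κA * ((b + 1) ^ 2 - 1) * σD2 / (2 * d)
      - (κA * b * a * σA2 * w / (d * u) + κA * b * σD2 / d + κU * a * σA2 / u)
      = (κU * a ^ 2 * σA2 * d + κA * b ^ 2 * σD2 * u - 2 * (κA * b * a * σA2) * w)
        / (2 * d * u) := by
    field_simp
    ring
  rw [e]
  exact div_nonneg (by linarith) (by positivity)
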